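/- Let X be a finite co-tree in which some point x has at least three distinct immediate predecessors z₁, z₂, z₃. Then the map f : X → F₃ sending ↑x to a, ↓z₁ to b, ↓z₂ to c, and all remaining points to d is a surjective bi-p-morphism onto F₃, the poset with top a and three pairwise incomparable minimal elements b, c, d below a. -/

import Mathlib

/-- The co-tree `F₃`: a top element `a` with three pairwise incomparable minimal
immediate predecessors `b`, `c`, `d`. -/
inductive F3 where
  | a | b | c | d
deriving DecidableEq

instance instFintypeF3 : Fintype F3 :=
  ⟨{F3.a, F3.b, F3.c, F3.d}, by intro x; cases x <;> simp⟩

def F3.leb : F3 → F3 → Bool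
  | _, .a => true
  | x, y => decide (x = y)

instance : PartialOrder F3 where
  le x y := F3.leb x y = true
  le_refl u := by
    show F3.leb u u = true
    cases u <;> decide
  le_trans u v w := by
    show F3.leb u v = true → F3.leb v w = true → F3.leb u w = true
    cases u <;> cases v <;> cases w <;> decide
  le_antisymm u v := by
    show F3.leb u v = true → F3.leb v u = true → u = v
    cases u <;> cases v <;> decide

instance : DecidableRel (α := F3) (· ≤ ·) := fun u v =>
  inferInstanceAs (Decidable (F3.leb u v = true))

/-- If in a finite co-tree a point `x` has three distinct immediate predecessors
`z₁, z₂, z₃`, then the map sending `↑x` to `a`, `↓z₁` to `b`, `↓z₂` to `c`, and all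
remaining points to `d` is a surjective bi-p-morphism onto `F₃`. -/
theorem cotree_three_preds_biPMorphism_to_F3 {X : Type*} [PartialOrder X] [OrderTop X]
    [Fintype X] (hchain : ∀ x : X, IsChain (· ≤ ·) (Set.Ici x))
    (x z1 z2 z3 : X) (h12 : z1 ≠ z2) (h13 : z1 ≠ z3) (h23 : z2 ≠ z3)
    (hz1 : z1 ⋖ x) (hz2 : z2 ⋖ x) (hz3 : z3 ⋖ x)
    (f : X → F3)
    (hfa : ∀ w, x ≤ w → f w = F3.a)
    (hfb : ∀ w, w ≤ z1 → f w = F3.b)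
    (hfc : ∀ w, w ≤ z2 → f w = F3.c)
    (hfd : ∀ w, ¬ x ≤ w → ¬ w ≤ z1 → ¬ w ≤ z2 → f w = F3.d) :
    Monotone f ∧
      (∀ (u : X) (y : F3), f u ≤ y → ∃ z, u ≤ z ∧ f z = y) ∧
      (∀ (u : X) (y : F3), y ≤ f u → ∃ z, z ≤ u ∧ f z = y) ∧
      Function.Surjective f := by
  classical
  have hcomp : ∀ w u v : X, w ≤ u → w ≤ v → u ≤ v ∨ v ≤ u := by
    intro w u v h1 h2
    rcases eq_or_ne u v with h | h
    · exact Or.inl h.le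
    · exact hchain w h1 h2 h
  have hne : ∀ u v : X, u ⋖ x → v ⋖ x → u ≠ v → ¬ u ≤ v := by
    intro u v hu hv huv hle
    rcases hle.lt_or_eq with h | h
    · exact hu.2 h hv.1
    · exact huv h
  have hA : ∀ (zi : X), zi ⋖ x → ∀ u v : X, u ≤ zi → u ≤ v → ¬ v ≤ zi → x ≤ v := by
    intro zi hzi u v hu huv hv
    rcases hcomp u zi v hu huv with h | h
    · have hlt : zi < v := h.lt_of_ne (fun he => hv (he ▸ le_refl _))
      rcases hcomp zi v x h hzi.1.le with h2 | h2
      · rcases h2.lt_or_eq with h3 | h3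
        · exact absurd h3 (hzi.2 hlt)
        · exact h3.ge
      · exact h2
    · exact absurd h hv
  have fx : f x = F3.a := hfa x le_rfl
  have fz1 : f z1 = F3.b := hfb z1 le_rfl
  have fz2 : f z2 = F3.c := hfc z2 le_rfl
  have fz3 : f z3 = F3.d :=
    hfd z3 hz3.lt.not_ge (hne z3 z1 hz3 hz1 h13.symm) (hne z3 z2 hz3 hz2 h23.symm)
  have ftop : f ⊤ = F3.a := hfa ⊤ le_top
  have mono : Monotone f := by
    intro u v huv
    by_cases hu1 : u ≤ z1
    · rw [hfb u hu1]
      by_cases hv1 : v ≤ z1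
      · rw [hfb v hv1]
      · rw [hfa v (hA z1 hz1 u v hu1 huv hv1)]; decide
    · by_cases hu2 : u ≤ z2
      · rw [hfc u hu2]
        by_cases hv2 : v ≤ z2
        · rw [hfc v hv2]
        · rw [hfa v (hA z2 hz2 u v hu2 huv hv2)]; decide
      · by_cases hux : x ≤ u
        · rw [hfa u hux, hfa v (hux.trans huv)]
        · rw [hfd u hux hu1 hu2]
          by_cases hv1 : v ≤ z1
          · exact absurd (huv.trans hv1) hu1
          · by_cases hv2 : v ≤ z2
            · exact absurd (huv.trans hv2) hu2
            · by_cases hvx : x ≤ v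
              · rw [hfa v hvx]; decide
              · rw [hfd v hvx hv1 hv2]
  refine ⟨mono, ?_, ?_, ?_⟩
  · intro u y hy
    by_cases h : f u = y
    · exact ⟨u, le_rfl, h⟩
    · have hya : y = F3.a := by
        revert hy h; generalize f u = w; revert w
        cases y <;> decide
      exact ⟨⊤, le_top, hya ▸ ftop⟩
  · intro u y hy
    by_cases h : f u = y
    · exact ⟨u, le_rfl, h⟩
    · have hua : f u = F3.a := by
        revert hy h; generalize f u = w; revert w
        cases y <;> decide
      have hxu : x ≤ u := by
        by_contra hxu
        by_cases hu1 : u ≤ z1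
        · rw [hfb u hu1] at hua; exact absurd hua (by decide)
        · by_cases hu2 : u ≤ z2
          · rw [hfc u hu2] at hua; exact absurd hua (by decide)
          · rw [hfd u hxu hu1 hu2] at hua; exact absurd hua (by decide)
      cases y with
      | a => exact absurd hua h
      | b => exact ⟨z1, hz1.1.le.trans hxu, fz1⟩
      | c => exact ⟨z2, hz2.1.le.trans hxu, fz2⟩
      | d => exact ⟨z3, hz3.1.le.trans hxu, fz3⟩
  · intro y
    cases y with
    | a => exact ⟨x, fx⟩
    | b => exact ⟨z1, fz1⟩
    | c => exact ⟨z2, fz2⟩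
    | d => exact ⟨z3, fz3⟩
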